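/- Let R be a commutative ring and let f ∈ R[x] be such that the R-algebra homomorphism R[x] → R[x] sending x to f is injective (equivalently, R[f] is a polynomial ring over R). Let g be a nilpotent element of R[x]. Then there exists y ∈ R[x] such that R[f, g] = R[y] and the R-algebra homomorphism R[x] → R[x] sending x to y is injective, if and only if g ∈ R[f]. -/

import Mathlib

open Polynomial

section Aux

variable {R : Type*} [CommRing R]

private lemma comp_dvd_aux (d p : R[X]) : d ∣ p - p.comp (X - d) := by
  have h := sub_dvd_eval_sub (R := R[X]) X (X - d) (p.map C)
  simp only [eval_map, sub_sub_cancel] at h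
  have h1 : eval₂ (C : R →+* R[X]) X p = p := by
    simp [comp]
  have h2 : eval₂ (C : R →+* R[X]) (X - d) p = p.comp (X - d) := rfl
  rwa [h1, h2] at h

private lemma delta_mem (d : R[X]) {I K : Ideal R}
    (hd : ∀ i, d.coeff i ∈ I) {p : R[X]}
    (hp : p ∈ Ideal.map (C : R →+* R[X]) K) :
    p - p.comp (X - d) ∈ Ideal.map (C : R →+* R[X]) (K * I) := by
  rw [Ideal.mem_map_C_iff] at hp
  -- handle monomials
  have key : ∀ a : R, a ∈ K → ∀ n : ℕ,
      C a * X ^ n - (C a * X ^ n).comp (X - d) ∈ Ideal.map (C : R →+* R[X]) (K * I) := by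
    intro a ha n
    obtain ⟨t, ht⟩ : d ∣ X ^ n - (X - d) ^ n := by
      have h := comp_dvd_aux d (X ^ n)
      rwa [X_pow_comp] at h
    have hrw : C a * X ^ n - (C a * X ^ n).comp (X - d) = (C a * d) * t := by
      rw [mul_comp, C_comp, X_pow_comp, ← mul_sub, ht]; ring
    rw [hrw]
    refine Ideal.mul_mem_right _ _ ?_
    rw [Ideal.mem_map_C_iff]
    intro i
    rw [coeff_C_mul]
    exact Ideal.mul_mem_mul ha (hd i)
  -- decompose p into monomials
  have hsum : p - p.comp (X - d) =
      ∑ i ∈ p.support, (C (p.coeff i) * X ^ i - (C (p.coeff i) * X ^ i).comp (X - d)) := by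
    rw [Finset.sum_sub_distrib]
    congr 1
    · exact p.as_sum_support_C_mul_X_pow
    · conv_lhs => rw [p.as_sum_support_C_mul_X_pow]
      simp [comp, Polynomial.eval₂_finset_sum]
  rw [hsum]
  exact Submodule.sum_mem _ fun i _ => key _ (hp i) i

/-- If `d` is nilpotent, the substitution `X ↦ X - d` is (compositionally) surjective
onto `X`. -/
private lemma exists_comp_inverse {d : R[X]} (hd : IsNilpotent d) :
    ∃ v : R[X], v.comp (X - d) = X := by
  classical
  set I : Ideal R := Ideal.span (d.support.image d.coeff : Finset R) with hI
  have hdI : ∀ i, d.coeff i ∈ I := by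
    intro i
    by_cases h : i ∈ d.support
    · exact Ideal.subset_span (Finset.mem_coe.mpr (Finset.mem_image_of_mem d.coeff h))
    · simp [Polynomial.notMem_support_iff.mp h]
  have hIrad : I ≤ (⊥ : Ideal R).radical := by
    rw [hI, Ideal.span_le]
    intro x hx
    simp only [Finset.coe_image, Set.mem_image, Finset.mem_coe] at hx
    obtain ⟨i, _, rfl⟩ := hx
    have := (Polynomial.isNilpotent_iff.mp hd) i
    obtain ⟨n, hn⟩ := this
    exact ⟨n, by simpa using hn⟩
  have hIfg : I.FG := ⟨d.support.image d.coeff, rfl⟩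
  obtain ⟨N, hN⟩ := Ideal.exists_pow_le_of_le_radical_of_fg hIrad hIfg
  have claim : ∀ m : ℕ, ∃ v : R[X],
      X - v.comp (X - d) ∈ Ideal.map (C : R →+* R[X]) (I ^ m) := by
    intro m
    induction m with
    | zero =>
      exact ⟨0, by simp [Ideal.one_eq_top, Ideal.map_top]⟩
    | succ m ih =>
      obtain ⟨v, hv⟩ := ih
      refine ⟨v + (X - v.comp (X - d)), ?_⟩
      have hrw : X - (v + (X - v.comp (X - d))).comp (X - d) =
          (X - v.comp (X - d)) - (X - v.comp (X - d)).comp (X - d) := by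
        rw [add_comp]; ring
      rw [hrw, pow_succ]
      exact delta_mem d hdI hv
  obtain ⟨v, hv⟩ := claim N
  have hmap : Ideal.map (C : R →+* R[X]) (I ^ N) = ⊥ := by
    have : I ^ N = ⊥ := le_bot_iff.mp hN
    rw [this, Ideal.map_bot]
  rw [hmap, Ideal.mem_bot, sub_eq_zero] at hv
  exact ⟨v, hv.symm⟩

end Aux

/-- Theorem: if `R[f]` is a polynomial ring over `R` and `g` is nilpotent, then
`R[f,g]` is a polynomial ring over `R` if and only if `g ∈ R[f]`. -/
theorem adjoin_nilpotent_polynomial_ring_iff (R : Type*) [CommRing R] (f : R[X])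
    (hf : Function.Injective (Polynomial.aeval f : R[X] →ₐ[R] R[X]))
    (g : R[X]) (hg : IsNilpotent g) :
    (∃ y : R[X], Algebra.adjoin R ({f, g} : Set R[X]) = Algebra.adjoin R {y} ∧
      Function.Injective (Polynomial.aeval y : R[X] →ₐ[R] R[X])) ↔
    g ∈ Algebra.adjoin R ({f} : Set R[X]) := by
  constructor
  · rintro ⟨y, hy, hyinj⟩
    -- y is congruent to an element of R[f] modulo nilpotents
    have hymem : y ∈ Algebra.adjoin R ({f, g} : Set R[X]) := by
      rw [hy]; exact Algebra.subset_adjoin rfl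
    have step1 : ∃ a ∈ Algebra.adjoin R ({f} : Set R[X]), IsNilpotent (y - a) := by
      refine Algebra.adjoin_induction ?_ ?_ ?_ ?_ hymem
      · rintro x (rfl | rfl)
        · exact ⟨x, Algebra.subset_adjoin rfl, by simp⟩
        · exact ⟨0, Subalgebra.zero_mem _, by simpa using hg⟩
      · intro r
        exact ⟨algebraMap R R[X] r, Subalgebra.algebraMap_mem _ r, by simp⟩
      · rintro z w _ _ ⟨a, ha, hna⟩ ⟨b, hb, hnb⟩
        refine ⟨a + b, Subalgebra.add_mem _ ha hb, ?_⟩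
        have : z + w - (a + b) = (z - a) + (w - b) := by ring
        rw [this]
        exact (Commute.all _ _).isNilpotent_add hna hnb
      · rintro z w _ _ ⟨a, ha, hna⟩ ⟨b, hb, hnb⟩
        refine ⟨a * b, Subalgebra.mul_mem _ ha hb, ?_⟩
        have : z * w - a * b = (z - a) * w + a * (w - b) := by ring
        rw [this]
        exact (Commute.all _ _).isNilpotent_add
          ((Commute.all _ _).isNilpotent_mul_right hna)
          ((Commute.all _ _).isNilpotent_mul_left hnb)
    obtain ⟨a, ha, hn⟩ := step1
    -- y - a lies in R[y]
    have hfa : Algebra.adjoin R ({f} : Set R[X]) ≤ Algebra.adjoin R {y} := by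
      rw [← hy]
      exact Algebra.adjoin_mono (by simp)
    have hamem : a ∈ Algebra.adjoin R ({y} : Set R[X]) := hfa ha
    have hnmem : y - a ∈ Algebra.adjoin R ({y} : Set R[X]) :=
      Subalgebra.sub_mem _ (Algebra.subset_adjoin rfl) hamem
    rw [Algebra.adjoin_singleton_eq_range_aeval] at hnmem
    obtain ⟨d, hd0⟩ := hnmem
    have hd : (Polynomial.aeval y) d = y - a := hd0
    -- d is nilpotent by injectivity
    have hdnil : IsNilpotent d := by
      obtain ⟨k, hk⟩ := hn
      refine ⟨k, hyinj ?_⟩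
      rw [map_pow, map_zero]
      rw [show ((Polynomial.aeval y : R[X] →ₐ[R] R[X]) d) = y - a from hd, hk]
    -- invert the substitution X ↦ X - d
    obtain ⟨v, hv⟩ := exists_comp_inverse hdnil
    -- y = aeval a v ∈ R[f]
    have hyval : y = Polynomial.aeval a v := by
      have h1 : Polynomial.aeval y (X - d) = a := by
        rw [map_sub, Polynomial.aeval_X, hd]; ring
      have h2 : (Polynomial.aeval y) (v.comp (X - d)) = y := by
        rw [hv, Polynomial.aeval_X]
      rw [Polynomial.aeval_comp, h1] at h2
      exact h2.symm
    have hymemf : y ∈ Algebra.adjoin R ({f} : Set R[X]) := by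
      rw [hyval]
      have : Polynomial.aeval a v ∈ Algebra.adjoin R ({a} : Set R[X]) := by
        rw [Algebra.adjoin_singleton_eq_range_aeval]
        exact ⟨v, rfl⟩
      exact Algebra.adjoin_le (Set.singleton_subset_iff.mpr ha) this
    -- conclude
    have hgmem : g ∈ Algebra.adjoin R ({y} : Set R[X]) := by
      rw [← hy]
      exact Algebra.subset_adjoin (by simp)
    exact Algebra.adjoin_le (Set.singleton_subset_iff.mpr hymemf) hgmem
  · intro hgf
    refine ⟨f, ?_, hf⟩
    apply le_antisymm
    · apply Algebra.adjoin_le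
      rintro x (rfl | rfl)
      · exact Algebra.subset_adjoin rfl
      · exact hgf
    · exact Algebra.adjoin_mono (by simp)
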